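/- arXiv:2006.12178 — 5 statements merged into one kernel-verified Lean document; each statement's English description precedes it below -/
import Mathlib

section
/- There is no monotonic self-referential Gödel numbering for standard numerals. Precisely: let ξ be an injective numbering of an arithmetical language satisfying monotonicity with respect to the strict sub-expression relation (ξ(A) < ξ(B) whenever A is a strict sub-expression of B). Then there is a formula A(x) such that for no n ∈ ℕ does ξ(A(n̲)) = n, where n̲ is the standard numeral S...S0 with n occurrences of S. -/
/-- There is no monotonic self-referential Gödel numbering for standard numerals.
Let `ξ` be an injective numbering of an arithmetical language (with codes of terms and
formulas given jointly by `ξ : Fm ⊕ Tm → ℕ`) which is monotonic with respect to the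
strict sub-expression relation `sub`. Then there is a formula `A(x)` such that for no
`n` does `ξ(A(n̲)) = n`, where `n̲ = S^n 0` is the standard numeral of `n`.

`subst A t` denotes `A(t)`; `orX` is disjunction of formulas with free variable `x`;
the standard numeral of `n` is `STm^[n] zeroTm`. -/
theorem no_monotonic_selfReferential_standard_numerals {Fm FmX Tm : Type*}
    (subst : FmX → Tm → Fm)
    (orX : FmX → FmX → FmX)
    (zeroTm : Tm) (STm : Tm → Tm)
    (sub : (Fm ⊕ Tm) → (Fm ⊕ Tm) → Prop)
    (ξ : Fm ⊕ Tm → ℕ) (hξ : Function.Injective ξ)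
    -- t is a strict sub-expression of S t
    (hS : ∀ t : Tm, sub (Sum.inr t) (Sum.inr (STm t)))
    -- each disjunct of a substituted disjunction is a strict sub-expression of it
    (hOr : ∀ (A B : FmX) (t : Tm), sub (Sum.inl (subst B t)) (Sum.inl (subst (orX A B) t)))
    -- the language has a formula B(x) in which x occurs freely at least once
    (hB : ∃ B : FmX, ∀ t : Tm, sub (Sum.inr t) (Sum.inl (subst B t)))
    -- monotonicity: codes strictly increase along the strict sub-expression relation
    (mono : ∀ e f : Fm ⊕ Tm, sub e f → ξ e < ξ f) :
    ∃ A : FmX, ∀ n : ℕ, ξ (Sum.inl (subst A (STm^[n] zeroTm))) ≠ n := by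
  obtain ⟨B, hBsub⟩ := hB
  have hnum : ∀ n : ℕ, n ≤ ξ (Sum.inr (STm^[n] zeroTm)) := by
    intro n
    induction n with
    | zero => exact Nat.zero_le _
    | succ n ih =>
      rw [Function.iterate_succ_apply']
      exact Nat.lt_of_le_of_lt ih (mono _ _ (hS _))
  refine ⟨B, fun n hn => ?_⟩
  have := Nat.lt_of_le_of_lt (hnum n) (mono _ _ (hBsub (STm^[n] zeroTm)))
  omega
end

section
/- Let ν be a numeral function for a language L and ξ a numbering of L satisfying (M3) ξ(s) < ξ(A) whenever term s occurs strictly in formula A, and (M4*) ξ(A) ≤ ξ(ν(ξ(A))) for all formulas A. Then ξ is not self-referential for ν: there is no formula A(x) with free variable x occurring in it and n ∈ ℕ with ξ(A(ν(n))) = n. -/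
/-- Let `ν` be a numeral function and `ξ` a numbering satisfying
(M3) `ξ s < ξ A` whenever the term `s` occurs strictly in the formula `A`, and
(M4*) `ξ A ≤ ξ (ν (ξ A))` for all formulas `A`. Then `ξ` is not self-referential for
`ν`: there is no formula `A(x)` with the free variable `x` occurring in it and no
`n ∈ ℕ` with `ξ(A(ν n)) = n`. -/
theorem not_selfReferential_of_M3_M4star {Fm FmX Tm : Type*}
    (subst : FmX → Tm → Fm)
    (occursIn : Tm → Fm → Prop)
    (ξ : Fm ⊕ Tm → ℕ)
    (ν : ℕ → Tm)
    (M3 : ∀ (s : Tm) (A : Fm), occursIn s A → ξ (Sum.inr s) < ξ (Sum.inl A))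
    (M4star : ∀ A : Fm, ξ (Sum.inl A) ≤ ξ (Sum.inr (ν (ξ (Sum.inl A))))) :
    ∀ A : FmX, (∀ t : Tm, occursIn t (subst A t)) →
      ∀ n : ℕ, ξ (Sum.inl (subst A (ν n))) ≠ n := by
  intro A hocc n hn
  have h1 := M3 (ν n) (subst A (ν n)) (hocc (ν n))
  have h2 := M4star (subst A (ν n))
  rw [hn] at h1 h2
  exact absurd h2 (not_le_of_gt h1)
end

section
/- Let α be a string over an alphabet extended with a fresh symbol c, and β a non-empty string over the original alphabet. Let p be the number of distinct substrings of α, q the number of distinct substrings of β, and r = |β|. Then the number of distinct substrings of α[c := β] (the result of replacing every occurrence of c in α by β) is at most (p − 1)·r² + q, and hence at most p·r² + 1. -/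
/-- Replacement of every occurrence of the fresh symbol `c` (represented by `none`)
in the string `α` over the extended alphabet `Option A` by the string `β` over `A`. -/
def substC {A : Type*} (α : List (Option A)) (β : List A) : List (Option A) :=
  α.flatMap fun x => x.elim (β.map some) (fun a => [a])

namespace SubstCAux

variable {A : Type*}

lemma substC_cons (x : Option A) (α : List (Option A)) (β : List A) :
    substC (x :: α) β = x.elim (β.map some) (fun a => [a]) ++ substC α β :=
  List.flatMap_cons ..

lemma substC_reverse (α : List (Option A)) (β : List A) :
    (substC α β).reverse = substC α.reverse β.reverse := by
  unfold substC
  rw [List.reverse_flatMap]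
  congr 1
  funext x
  cases x <;> simp

lemma infix_finite {B : Type*} (l : List B) : {γ : List B | γ <:+: l}.Finite := by
  apply Set.Finite.subset (l.tails.flatMap List.inits).finite_toSet
  intro γ hγ
  simp only [Set.mem_setOf_eq] at hγ
  obtain ⟨t, h1, h2⟩ := List.infix_iff_prefix_suffix.mp hγ
  simp only [Set.mem_setOf_eq, List.mem_flatMap, List.mem_tails, List.mem_inits]
  exact ⟨t, h2, h1⟩

lemma prefix_subst (β : List A) (hβ : β ≠ []) :
    ∀ (α : List (Option A)) (γ : List (Option A)), γ <+: substC α β → γ ≠ [] →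
    ∃ δ t, δ <+: α ∧ δ ≠ [] ∧ t.length < β.length ∧ γ ++ t = substC δ β := by
  have hr1 : 0 < β.length := List.length_pos_iff.mpr hβ
  intro α
  induction α with
  | nil =>
    intro γ h hne
    simp only [substC, List.flatMap_nil, List.prefix_nil] at h
    exact absurd h hne
  | cons x α ih =>
    intro γ hpre hne
    rw [substC_cons] at hpre
    set blk := x.elim (β.map some) (fun a => [a] : A → List (Option A)) with hblk
    have hγpos : 0 < γ.length := List.length_pos_iff.mpr hne
    have hblen : 0 < blk.length ∧ blk.length ≤ β.length := by
      cases x <;> simp [hblk] <;> omega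
    by_cases hlen : γ.length ≤ blk.length
    · rw [List.prefix_iff_eq_take] at hpre
      have h1 : γ = blk.take γ.length := by
        conv_lhs => rw [hpre]
        exact List.take_append_of_le_length hlen
      refine ⟨[x], blk.drop γ.length, ⟨α, rfl⟩, by simp, ?_, ?_⟩
      · simp only [List.length_drop]
        omega
      · have h2 := List.take_append_drop γ.length blk
        rw [← h1] at h2
        rw [h2]
        simp [substC, hblk]
    · push_neg at hlen
      rw [List.prefix_iff_eq_take] at hpre
      have hblkpre : blk <+: γ := by
        rw [List.prefix_iff_eq_take]
        conv_rhs => rw [hpre]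
        rw [List.take_take, min_eq_left hlen.le, List.take_left]
      rw [← List.prefix_iff_eq_take] at hpre
      obtain ⟨γ', rfl⟩ := hblkpre
      have hγ' : γ' <+: substC α β := (List.prefix_append_right_inj blk).mp hpre
      have hγ'ne : γ' ≠ [] := by
        rintro rfl
        simp at hlen
      obtain ⟨δ, t, hδ, hδne, htlen, heq⟩ := ih γ' hγ' hγ'ne
      refine ⟨x :: δ, t, List.cons_prefix_cons.mpr ⟨rfl, hδ⟩, by simp, htlen, ?_⟩
      rw [substC_cons, ← heq, List.append_assoc]

lemma suffix_subst (β : List A) (hβ : β ≠ []) (α γ : List (Option A))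
    (h : γ <:+ substC α β) (hne : γ ≠ []) :
    ∃ δ s, δ <:+ α ∧ δ ≠ [] ∧ s.length < β.length ∧ s ++ γ = substC δ β := by
  have h' : γ.reverse <+: substC α.reverse β.reverse := by
    rw [← substC_reverse]
    exact List.reverse_prefix.mpr h
  obtain ⟨δ, t, hδ, hδne, htlen, heq⟩ :=
    prefix_subst β.reverse (by simpa) α.reverse γ.reverse h' (by simpa)
  refine ⟨δ.reverse, t.reverse, ?_, by simpa, by simpa using htlen, ?_⟩
  · rw [← List.reverse_reverse α]
    exact List.reverse_suffix.mpr hδ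
  · have := congrArg List.reverse heq
    rw [List.reverse_append, List.reverse_reverse, substC_reverse,
      List.reverse_reverse] at this
    exact this

lemma infix_subst (β : List A) (hβ : β ≠ []) (α γ : List (Option A))
    (h : γ <:+: substC α β) (hne : γ ≠ []) :
    ∃ δ i j, δ <:+: α ∧ δ ≠ [] ∧ i < β.length ∧ j < β.length ∧
      γ = ((substC δ β).drop i).take ((substC δ β).length - i - j) := by
  obtain ⟨η, hpre, hsuf⟩ := List.infix_iff_prefix_suffix.mp h
  have hηne : η ≠ [] := by
    rintro rfl
    exact hne (List.prefix_nil.mp hpre)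
  obtain ⟨δ₀, s, hδ₀, hδ₀ne, hslen, hseq⟩ := suffix_subst β hβ α η hsuf hηne
  have hpre2 : s ++ γ <+: substC δ₀ β := by
    rw [← hseq]
    exact (List.prefix_append_right_inj s).mpr hpre
  obtain ⟨δ, t, hδ, hδne, htlen, heq⟩ :=
    prefix_subst β hβ δ₀ (s ++ γ) hpre2 (by simp [hne])
  refine ⟨δ, s.length, t.length, hδ.isInfix.trans hδ₀.isInfix, hδne, hslen, htlen, ?_⟩
  have hform : substC δ β = s ++ (γ ++ t) := by
    rw [← heq, List.append_assoc]
  rw [hform, List.drop_left]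
  have hL : (s ++ (γ ++ t)).length - s.length - t.length = γ.length := by
    simp only [List.length_append]
    omega
  rw [hL, List.take_left]

lemma ncard_prod {X Y : Type*} (s : Set X) (t : Set Y) :
    (s ×ˢ t).ncard = s.ncard * t.ncard := by
  rw [← Nat.card_coe_set_eq, ← Nat.card_coe_set_eq, ← Nat.card_coe_set_eq,
    Nat.card_congr (Equiv.Set.prod s t), Nat.card_prod]

end SubstCAux

/-- Let `α` be a string over an alphabet extended with a fresh symbol `c` (in which `c`
occurs) and `β` a non-empty string over the original alphabet. If `p` is the number of
distinct substrings of `α`, `q` the number of distinct substrings of `β`, and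
`r = |β|`, then the number of distinct substrings of `α[c := β]` is at most
`(p − 1)·r² + q`, and hence at most `p·r² + 1`. -/
theorem substrings_of_subst_le {A : Type*} (α : List (Option A)) (β : List A)
    (hc : (none : Option A) ∈ α) (hβ : β ≠ [])
    (p q r : ℕ)
    (hp : p = {γ : List (Option A) | γ <:+: α}.ncard)
    (hq : q = {γ : List A | γ <:+: β}.ncard)
    (hr : r = β.length) :
    {γ : List (Option A) | γ <:+: substC α β}.ncard ≤ (p - 1) * r ^ 2 + q ∧
    {γ : List (Option A) | γ <:+: substC α β}.ncard ≤ p * r ^ 2 + 1 := by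
  classical
  have hr1 : 0 < r := hr ▸ List.length_pos_iff.mpr hβ
  set g : List (Option A) × ℕ × ℕ → List (Option A) :=
    fun z => ((substC z.1 β).drop z.2.1).take ((substC z.1 β).length - z.2.1 - z.2.2)
    with hg
  set D : Set (List (Option A)) := {δ | δ <:+: α ∧ δ ≠ []} with hD
  have hcover : {γ : List (Option A) | γ <:+: substC α β} ⊆
      g '' (D ×ˢ ((Set.Iio r : Set ℕ) ×ˢ (Set.Iio r : Set ℕ))) ∪ {([] : List (Option A))} := by
    intro γ hγ
    by_cases hne : γ = []
    · right
      simp [hne]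
    · left
      obtain ⟨δ, i, j, hδ, hδne, hi, hj, hγeq⟩ :=
        SubstCAux.infix_subst β hβ α γ hγ hne
      refine ⟨(δ, i, j), ?_, hγeq.symm⟩
      refine ⟨⟨hδ, hδne⟩, ?_, ?_⟩ <;> simp [Set.mem_Iio] <;> omega
  have hDfin : D.Finite := (SubstCAux.infix_finite α).subset (fun x hx => hx.1)
  have hIio : (Set.Iio r : Set ℕ).Finite := Set.finite_Iio r
  have hdomfin : (D ×ˢ ((Set.Iio r : Set ℕ) ×ˢ (Set.Iio r : Set ℕ))).Finite :=
    hDfin.prod (hIio.prod hIio)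
  have hIiocard : (Set.Iio r : Set ℕ).ncard = r := by
    rw [← Finset.coe_Iio, Set.ncard_coe_finset]
    simp
  have hDcard : D.ncard = p - 1 := by
    have hDeq : D = {γ : List (Option A) | γ <:+: α} \ {([] : List (Option A))} := by
      ext δ
      simp [hD, Set.mem_diff]
    rw [hDeq, Set.ncard_diff_singleton_of_mem
      (show ([] : List (Option A)) ∈ {γ : List (Option A) | γ <:+: α} by simp [List.nil_infix]), hp]
  have hdomcard : (D ×ˢ ((Set.Iio r : Set ℕ) ×ˢ (Set.Iio r : Set ℕ))).ncard = (p - 1) * (r * r) := by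
    rw [SubstCAux.ncard_prod, SubstCAux.ncard_prod, hIiocard, hDcard]
  have hmain : {γ : List (Option A) | γ <:+: substC α β}.ncard ≤ (p - 1) * r ^ 2 + 1 := by
    calc {γ : List (Option A) | γ <:+: substC α β}.ncard
        ≤ (g '' (D ×ˢ ((Set.Iio r : Set ℕ) ×ˢ (Set.Iio r : Set ℕ))) ∪
            {([] : List (Option A))}).ncard := by
          refine Set.ncard_le_ncard hcover ?_
          exact (hdomfin.image g).union (Set.finite_singleton _)
      _ ≤ (g '' (D ×ˢ ((Set.Iio r : Set ℕ) ×ˢ (Set.Iio r : Set ℕ)))).ncard +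
            ({([] : List (Option A))} : Set (List (Option A))).ncard :=
          Set.ncard_union_le _ _
      _ ≤ (p - 1) * r ^ 2 + 1 := by
          rw [Set.ncard_singleton]
          have h2 := Set.ncard_image_le (f := g) hdomfin
          rw [hdomcard] at h2
          have hrr : (p - 1) * (r * r) = (p - 1) * r ^ 2 := by ring
          rw [hrr] at h2
          omega
  have hq1 : 1 ≤ q := by
    rw [hq]
    exact (Set.ncard_pos (SubstCAux.infix_finite β)).mpr ⟨[], List.nil_infix⟩
  have hp1 : 1 ≤ p := by
    rw [hp]
    exact (Set.ncard_pos (SubstCAux.infix_finite α)).mpr ⟨[], List.nil_infix⟩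
  constructor
  · omega
  · have : (p - 1) * r ^ 2 ≤ p * r ^ 2 := Nat.mul_le_mul_right _ (Nat.sub_le p 1)
    omega
end

section
/- Let S be a set of strings closed under two injective binary constructor operations (α, β) ↦ Aαβ and (α, β) ↦ Mαβ (prefixing a constructor symbol to the concatenation), and let ξ: S → ℕ be a bijection such that the ξ-tracking functions of both operations are monotonic (i.e., the function (ξ(α), ξ(β)) ↦ ξ(Aαβ) is weakly monotone in each argument, and similarly for M). Then for all α, β ∈ S: ξ(Aαβ) > ξ(α)·ξ(β) and ξ(Mαβ) > ξ(α)·ξ(β). -/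
lemma tracking_key {Γ : Type*} (c : Γ) (S : Set (List Γ))
    (hC : ∀ ⦃α⦄, α ∈ S → ∀ ⦃β⦄, β ∈ S → c :: (α ++ β) ∈ S)
    (hCinj : ∀ ⦃α⦄, α ∈ S → ∀ ⦃β⦄, β ∈ S → ∀ ⦃α'⦄, α' ∈ S → ∀ ⦃β'⦄, β' ∈ S →
      c :: (α ++ β) = c :: (α' ++ β') → α = α' ∧ β = β')
    (ξ : S → ℕ) (hξ : Function.Bijective ξ)
    (hmono : ∀ α β α' β' : S, ξ α ≤ ξ α' → ξ β ≤ ξ β' →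
      ξ ⟨c :: (α.1 ++ β.1), hC α.2 β.2⟩ ≤ ξ ⟨c :: (α'.1 ++ β'.1), hC α'.2 β'.2⟩) :
    ∀ α β : S, ξ α * ξ β < ξ ⟨c :: (α.1 ++ β.1), hC α.2 β.2⟩ := by
  intro α β
  set e := Equiv.ofBijective ξ hξ with he
  set x := ξ α with hx
  set y := ξ β with hy
  set C := ξ ⟨c :: (α.1 ++ β.1), hC α.2 β.2⟩ with hCdef
  have hξsymm : ∀ n : ℕ, ξ (e.symm n) = n := fun n => e.apply_symm_apply n
  -- the counting map
  set f : ℕ × ℕ → ℕ := fun p =>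
    ξ ⟨c :: ((e.symm p.1).1 ++ (e.symm p.2).1), hC (e.symm p.1).2 (e.symm p.2).2⟩ with hf
  have finj : Function.Injective f := by
    intro p q hpq
    have h1 : (⟨c :: ((e.symm p.1).1 ++ (e.symm p.2).1), hC (e.symm p.1).2 (e.symm p.2).2⟩ : S)
        = ⟨c :: ((e.symm q.1).1 ++ (e.symm q.2).1), hC (e.symm q.1).2 (e.symm q.2).2⟩ :=
      hξ.injective hpq
    have h2 := congrArg Subtype.val h1
    obtain ⟨h3, h4⟩ := hCinj (e.symm p.1).2 (e.symm p.2).2 (e.symm q.1).2 (e.symm q.2).2 h2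
    have h5 : e.symm p.1 = e.symm q.1 := Subtype.ext h3
    have h6 : e.symm p.2 = e.symm q.2 := Subtype.ext h4
    have := e.symm.injective h5
    have := e.symm.injective h6
    exact Prod.ext ‹p.1 = q.1› ‹p.2 = q.2›
  have hmaps : ∀ p ∈ Finset.range (x + 1) ×ˢ Finset.range (y + 1), f p ∈ Finset.range (C + 1) := by
    intro p hp
    rw [Finset.mem_product, Finset.mem_range, Finset.mem_range] at hp
    have h1 : ξ (e.symm p.1) ≤ ξ α := by rw [hξsymm]; omega
    have h2 : ξ (e.symm p.2) ≤ ξ β := by rw [hξsymm]; omega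
    have h3 := hmono (e.symm p.1) (e.symm p.2) α β h1 h2
    simp only [hf, Finset.mem_range]
    omega
  have hcard := Finset.card_le_card_of_injOn f hmaps (finj.injOn)
  simp [Finset.card_product, Finset.card_range] at hcard
  have hle : x * y + x + y ≤ C := by nlinarith [hcard]
  rcases Nat.eq_zero_or_pos (x + y) with h | h
  · have hx0 : x = 0 := by omega
    have hCne : C ≠ 0 := by
      intro hC0
      have hxieq : ξ ⟨c :: (α.1 ++ β.1), hC α.2 β.2⟩ = ξ α := by omega
      have heq : (⟨c :: (α.1 ++ β.1), hC α.2 β.2⟩ : S) = α := hξ.injective hxieq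
      have hlen := congrArg (fun s : S => s.1.length) heq
      simp at hlen
      omega
    have hxy : x * y = 0 := by rw [hx0]; exact Nat.zero_mul y
    clear hcard
    omega
  · clear hcard
    omega

/-- Pakhomov's lemma. Let `S` be a set of strings closed under the two injective
binary constructor operations `(α, β) ↦ Aαβ` and `(α, β) ↦ Mαβ` (prefixing a
constructor symbol `a`, resp. `m`, to the concatenation), and let `ξ : S → ℕ` be a
bijection whose ξ-tracking functions of both operations are monotonic. Then for all
`α, β ∈ S`: `ξ(Aαβ) > ξ(α)·ξ(β)` and `ξ(Mαβ) > ξ(α)·ξ(β)`. -/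
theorem tracking_monotone_gt_mul {Γ : Type*} (a m : Γ) (S : Set (List Γ))
    (hA : ∀ ⦃α⦄, α ∈ S → ∀ ⦃β⦄, β ∈ S → a :: (α ++ β) ∈ S)
    (hM : ∀ ⦃α⦄, α ∈ S → ∀ ⦃β⦄, β ∈ S → m :: (α ++ β) ∈ S)
    (hAinj : ∀ ⦃α⦄, α ∈ S → ∀ ⦃β⦄, β ∈ S → ∀ ⦃α'⦄, α' ∈ S → ∀ ⦃β'⦄, β' ∈ S →
      a :: (α ++ β) = a :: (α' ++ β') → α = α' ∧ β = β')
    (hMinj : ∀ ⦃α⦄, α ∈ S → ∀ ⦃β⦄, β ∈ S → ∀ ⦃α'⦄, α' ∈ S → ∀ ⦃β'⦄, β' ∈ S →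
      m :: (α ++ β) = m :: (α' ++ β') → α = α' ∧ β = β')
    (ξ : S → ℕ) (hξ : Function.Bijective ξ)
    (hAmono : ∀ α β α' β' : S, ξ α ≤ ξ α' → ξ β ≤ ξ β' →
      ξ ⟨a :: (α.1 ++ β.1), hA α.2 β.2⟩ ≤ ξ ⟨a :: (α'.1 ++ β'.1), hA α'.2 β'.2⟩)
    (hMmono : ∀ α β α' β' : S, ξ α ≤ ξ α' → ξ β ≤ ξ β' →
      ξ ⟨m :: (α.1 ++ β.1), hM α.2 β.2⟩ ≤ ξ ⟨m :: (α'.1 ++ β'.1), hM α'.2 β'.2⟩) :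
    ∀ α β : S, ξ α * ξ β < ξ ⟨a :: (α.1 ++ β.1), hA α.2 β.2⟩ ∧
      ξ α * ξ β < ξ ⟨m :: (α.1 ++ β.1), hM α.2 β.2⟩ := by
  intro α β
  exact ⟨tracking_key a S hA hAinj ξ hξ hAmono α β,
         tracking_key m S hM hMinj ξ hξ hMmono α β⟩
end

section
/- Let ξ be a numbering of a language L satisfying (M3): ξ(t) < ξ(A) whenever the closed term t occurs strictly in the formula A, and (M5): ev(t) ≤ ξ(t) for every closed term t. Then for every formula A(x) and every closed term t, it is not the case that ev(t) = ξ(A(t)). In other words, no strong fixed-point term exists. -/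
/-- Let `ξ` be a numbering satisfying (M3): `ξ t < ξ A` whenever the closed term `t`
occurs strictly in the formula `A`, and (M5, domination): `ev t ≤ ξ t` for every
closed term `t`. Then for every formula `A(x)` (with `x` occurring in it) and every
closed term `t`, it is not the case that `ev t = ξ(A(t))`: no strong fixed-point term
exists. -/
theorem no_strong_fixed_point {Fm FmX Tm : Type*}
    (subst : FmX → Tm → Fm)
    (occursIn : Tm → Fm → Prop)
    (ev : Tm → ℕ)
    (ξ : Fm ⊕ Tm → ℕ)
    (M3 : ∀ (t : Tm) (A : Fm), occursIn t A → ξ (Sum.inr t) < ξ (Sum.inl A))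
    (M5 : ∀ t : Tm, ev t ≤ ξ (Sum.inr t)) :
    ∀ A : FmX, (∀ u : Tm, occursIn u (subst A u)) →
      ∀ t : Tm, ev t ≠ ξ (Sum.inl (subst A t)) := by
  intro A hA t h
  have := M3 t (subst A t) (hA t)
  have := M5 t
  omega
end
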